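/- Let G be a graph, v a vertex of G, and let G' be obtained from G by deleting v and identifying (merging) all neighbours of v into a single vertex. If G is (4m, 2m)-choosable then G' is (4m, 2m)-choosable. Consequently, if Θ_{2,2r,2s} is (4m,2m)-choosable then Θ_{1,2r−1,2s−1} is (4m,2m)-choosable. -/

import Mathlib

/-- `G` is `(a,b)`-choosable: for every assignment of `a`-element lists of colours
there is a choice of `b`-element subsets with adjacent vertices disjoint. -/
def Choosable {V : Type} (G : SimpleGraph V) (a b : ℕ) : Prop :=
  ∀ L : V → Finset ℕ, (∀ v, (L v).card = a) →
    ∃ φ : V → Finset ℕ, (∀ v, φ v ⊆ L v) ∧ (∀ v, (φ v).card = b) ∧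
      ∀ u v, G.Adj u v → Disjoint (φ u) (φ v)

/-- The graph obtained from `G` by deleting the vertex `v` and merging all of its
neighbours into a single new vertex (the `Sum.inr` vertex); the remaining vertices
are those different from `v` and not adjacent to `v`. -/
def mergeNbrs {V : Type} (G : SimpleGraph V) (v : V) :
    SimpleGraph ({w : V // w ≠ v ∧ ¬G.Adj v w} ⊕ Unit) where
  Adj x y :=
    match x, y with
    | Sum.inl a, Sum.inl b => G.Adj a.1 b.1
    | Sum.inl a, Sum.inr _ => ∃ u, G.Adj v u ∧ G.Adj a.1 u
    | Sum.inr _, Sum.inl b => ∃ u, G.Adj v u ∧ G.Adj u b.1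
    | Sum.inr _, Sum.inr _ => False
  symm := by
    constructor
    rintro (a | a) (b | b) h
    · exact G.adj_symm h
    · obtain ⟨u, hu1, hu2⟩ := h; exact ⟨u, hu1, G.adj_symm hu2⟩
    · obtain ⟨u, hu1, hu2⟩ := h; exact ⟨u, hu1, G.adj_symm hu2⟩
    · exact h
  loopless := by
    constructor
    rintro (a | a) h
    · exact G.irrefl h
    · exact h

/-- The `j`-th vertex of a path of length `len` from vertex `0` to vertex `1`,
whose internal vertices are `o, o+1, …, o+len-2`. -/
def pf (o len j : ℕ) : ℕ := if j = 0 then 0 else if j = len then 1 else o + j - 1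

/-- The theta graph `Θ_{a,b,c}`: two vertices `0` and `1` joined by three
internally disjoint paths of lengths `a`, `b`, `c`. -/
def theta (a b c : ℕ) : SimpleGraph ℕ :=
  SimpleGraph.fromEdgeSet
    { e | (∃ i < a, e = s(pf 2 a i, pf 2 a (i + 1))) ∨
          (∃ i < b, e = s(pf (a + 1) b i, pf (a + 1) b (i + 1))) ∨
          (∃ i < c, e = s(pf (a + b) c i, pf (a + b) c (i + 1))) }

open Finset in
lemma part1 (V : Type) (G : SimpleGraph V) (v : V) (m : ℕ)
    (hG : Choosable G (4 * m) (2 * m)) : Choosable (mergeNbrs G v) (4 * m) (2 * m) := by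
  classical
  intro L' hL'
  set L : V → Finset ℕ := fun w =>
    if h : w ≠ v ∧ ¬G.Adj v w then L' (Sum.inl ⟨w, h⟩) else L' (Sum.inr ()) with hLdef
  have hL : ∀ w, (L w).card = 4 * m := by
    intro w; simp only [hLdef]; split_ifs <;> apply hL'
  obtain ⟨φ, hsub, hcard, hdisj⟩ := hG L hL
  have hLv : L v = L' (Sum.inr ()) := by
    simp only [hLdef]; rw [dif_neg]; simp
  have hvL : φ v ⊆ L' (Sum.inr ()) := hLv ▸ hsub v
  have hkey : ∀ u, G.Adj v u → φ u = L' (Sum.inr ()) \ φ v := by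
    intro u hu
    have hLu : L u = L' (Sum.inr ()) := by
      simp only [hLdef]; rw [dif_neg]; tauto
    have h1 : φ u ⊆ L' (Sum.inr ()) \ φ v :=
      Finset.subset_sdiff.mpr ⟨hLu ▸ hsub u, (hdisj v u hu).symm⟩
    apply Finset.eq_of_subset_of_card_le h1
    rw [Finset.card_sdiff_of_subset hvL, hL', hcard, hcard]
    omega
  refine ⟨fun x => match x with
    | Sum.inl w => φ w.1
    | Sum.inr _ => L' (Sum.inr ()) \ φ v, ?_, ?_, ?_⟩
  · rintro (w | w)
    · have : L w.1 = L' (Sum.inl w) := by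
        simp only [hLdef]; rw [dif_pos w.2]
      exact this ▸ hsub w.1
    · exact Finset.sdiff_subset
  · rintro (w | w)
    · exact hcard w.1
    · rw [Finset.card_sdiff_of_subset hvL, hL', hcard]; omega
  · rintro (a | a) (b | b) h
    · exact hdisj a.1 b.1 h
    · obtain ⟨u, hu1, hu2⟩ := h
      rw [← hkey u hu1]
      exact hdisj a.1 u hu2
    · obtain ⟨u, hu1, hu2⟩ := h
      rw [← hkey u hu1]
      exact hdisj u b.1 hu2
    · exact h.elim
lemma choosable_transfer {V₁ V₂ : Type} (G₁ : SimpleGraph V₁) (G₂ : SimpleGraph V₂)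
    (f : V₂ → V₁) (g : V₁ → V₂)
    (hadj : ∀ x y, G₂.Adj x y → G₁.Adj (f x) (f y))
    (hgf : ∀ x, g (f x) = x)
    {a b : ℕ} (hab : b ≤ a) (h : Choosable G₁ a b) : Choosable G₂ a b := by
  classical
  intro L hL
  obtain ⟨φ, hsub, hcard, hdisj⟩ := h (fun u => L (g u)) (fun u => hL (g u))
  refine ⟨fun x => φ (f x), ?_, ?_, ?_⟩
  · intro x; have := hsub (f x); rwa [hgf x] at this
  · intro x; exact hcard (f x)
  · intro x y hxy; exact hdisj _ _ (hadj x y hxy)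

lemma pf_ne {o len i : ℕ} (ho : 2 ≤ o) (hi : i < len) : pf o len i ≠ pf o len (i + 1) := by
  unfold pf; split_ifs <;> first | omega | simp_all

lemma theta_adj_iff {a b c u v : ℕ} : (theta a b c).Adj u v ↔
    ((∃ i < a, s(u, v) = s(pf 2 a i, pf 2 a (i + 1))) ∨
     (∃ i < b, s(u, v) = s(pf (a + 1) b i, pf (a + 1) b (i + 1))) ∨
     (∃ i < c, s(u, v) = s(pf (a + b) c i, pf (a + b) c (i + 1)))) ∧ u ≠ v := by
  rw [theta, SimpleGraph.fromEdgeSet_adj]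
  simp only [Set.mem_setOf_eq]

lemma theta_adj1 {a b c i : ℕ} (hi : i < a) :
    (theta a b c).Adj (pf 2 a i) (pf 2 a (i + 1)) :=
  theta_adj_iff.mpr ⟨Or.inl ⟨i, hi, rfl⟩, pf_ne (le_refl 2) hi⟩

lemma theta_adj2 {a b c i : ℕ} (ha : 1 ≤ a) (hi : i < b) :
    (theta a b c).Adj (pf (a + 1) b i) (pf (a + 1) b (i + 1)) :=
  theta_adj_iff.mpr ⟨Or.inr (Or.inl ⟨i, hi, rfl⟩), pf_ne (by omega) hi⟩

lemma theta_adj3 {a b c i : ℕ} (hab : 2 ≤ a + b) (hi : i < c) :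
    (theta a b c).Adj (pf (a + b) c i) (pf (a + b) c (i + 1)) :=
  theta_adj_iff.mpr ⟨Or.inr (Or.inr ⟨i, hi, rfl⟩), pf_ne hab hi⟩

lemma adj_zero {a b c w : ℕ} (ha : 2 ≤ a) (hb : 2 ≤ b) (hc : 2 ≤ c)
    (h : (theta a b c).Adj 0 w) : w = 2 ∨ w = a + 1 ∨ w = a + b := by
  obtain ⟨h1, _⟩ := theta_adj_iff.mp h
  rcases h1 with ⟨i, hi, he⟩ | ⟨i, hi, he⟩ | ⟨i, hi, he⟩ <;>
  · rw [Sym2.eq_iff] at he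
    unfold pf at he
    rcases he with ⟨e1, e2⟩ | ⟨e1, e2⟩ <;> split_ifs at e1 e2 <;> first | omega | simp_all

lemma mergeNbrs_adj_inl_inl {V : Type} (G : SimpleGraph V) (v : V) (a b) :
    (mergeNbrs G v).Adj (Sum.inl a) (Sum.inl b) ↔ G.Adj a.1 b.1 := Iff.rfl

lemma mergeNbrs_adj_inr_inl {V : Type} (G : SimpleGraph V) (v : V) (b) :
    (mergeNbrs G v).Adj (Sum.inr ()) (Sum.inl b) ↔ ∃ u, G.Adj v u ∧ G.Adj u b.1 := Iff.rfl
/-- numeric vertex map from `Θ_{1,2r-1,2s-1}` into `Θ_{2,2r,2s}`. -/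
def fmapAux (r k : ℕ) : ℕ := if k ≤ 1 then k else if k ≤ 2 * r - 1 then k + 2 else k + 3

lemma Fprop (r s k : ℕ) (hr : 1 ≤ r) (hs : 1 ≤ s) (hk : 1 ≤ k) :
    fmapAux r k ≠ 0 ∧ ¬ (theta 2 (2 * r) (2 * s)).Adj 0 (fmapAux r k) := by
  have hne : fmapAux r k ≠ 0 ∧ fmapAux r k ≠ 2 ∧ fmapAux r k ≠ 3 ∧ fmapAux r k ≠ 2 + 2 * r := by
    unfold fmapAux; split_ifs <;> omega
  refine ⟨hne.1, fun h => ?_⟩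
  have h2 := adj_zero (a := 2) (b := 2 * r) (c := 2 * s) (by norm_num) (by omega) (by omega) h
  omega

def fmap (r s : ℕ) (hr : 1 ≤ r) (hs : 1 ≤ s) (k : ℕ) :
    ({w : ℕ // w ≠ 0 ∧ ¬(theta 2 (2 * r) (2 * s)).Adj 0 w} ⊕ Unit) :=
  if hk : 1 ≤ k then Sum.inl ⟨fmapAux r k, Fprop r s k hr hs hk⟩ else Sum.inr ()

lemma fmap_eq_inl (r s k : ℕ) (hr : 1 ≤ r) (hs : 1 ≤ s) (hk : 1 ≤ k) :
    fmap r s hr hs k = Sum.inl ⟨fmapAux r k, Fprop r s k hr hs hk⟩ :=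
  dif_pos hk

lemma fmap_eq_inr (r s : ℕ) (hr : 1 ≤ r) (hs : 1 ≤ s) : fmap r s hr hs 0 = Sum.inr () :=
  dif_neg (by omega)

def gmap (r s : ℕ) : ({w : ℕ // w ≠ 0 ∧ ¬(theta 2 (2 * r) (2 * s)).Adj 0 w} ⊕ Unit) → ℕ
  | Sum.inl w => if w.1 = 1 then 1 else if w.1 ≤ 2 * r + 1 then w.1 - 2 else w.1 - 3
  | Sum.inr _ => 0

lemma gf (r s k : ℕ) (hr : 1 ≤ r) (hs : 1 ≤ s) : gmap r s (fmap r s hr hs k) = k := by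
  rcases Nat.eq_zero_or_pos k with rfl | hk
  · rw [fmap_eq_inr]; rfl
  · rw [fmap_eq_inl r s k hr hs hk]
    show (if fmapAux r k = 1 then 1 else
      if fmapAux r k ≤ 2 * r + 1 then fmapAux r k - 2 else fmapAux r k - 3) = k
    unfold fmapAux; split_ifs <;> omega

lemma part2 (m r s : ℕ) (hr : 1 ≤ r) (hs : 1 ≤ s)
    (hG : Choosable (theta 2 (2 * r) (2 * s)) (4 * m) (2 * m)) :
    Choosable (theta 1 (2 * r - 1) (2 * s - 1)) (4 * m) (2 * m) := by
  have hGc := part1 ℕ (theta 2 (2 * r) (2 * s)) 0 m hG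
  set G := theta 2 (2 * r) (2 * s) with hGdef
  -- concrete edges of G
  have e02 : G.Adj 0 2 := by
    have h := theta_adj1 (a := 2) (b := 2 * r) (c := 2 * s) (i := 0) (by norm_num)
    have p1 : pf 2 2 0 = 0 := by unfold pf; split_ifs <;> first | omega | exact ‹False›.elim
    have p2 : pf 2 2 (0 + 1) = 2 := by unfold pf; split_ifs <;> first | omega | exact ‹False›.elim
    rwa [p1, p2] at h
  have e21 : G.Adj 2 1 := by
    have h := theta_adj1 (a := 2) (b := 2 * r) (c := 2 * s) (i := 1) (by norm_num)
    have p1 : pf 2 2 1 = 2 := by unfold pf; split_ifs <;> first | omega | exact ‹False›.elim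
    have p2 : pf 2 2 (1 + 1) = 1 := by unfold pf; split_ifs <;> first | omega | exact ‹False›.elim
    rwa [p1, p2] at h
  have e03 : G.Adj 0 3 := by
    have h := theta_adj2 (a := 2) (b := 2 * r) (c := 2 * s) (i := 0) (by norm_num) (by omega)
    have p1 : pf (2 + 1) (2 * r) 0 = 0 := by unfold pf; split_ifs <;> first | omega | exact ‹False›.elim
    have p2 : pf (2 + 1) (2 * r) (0 + 1) = 3 := by
      unfold pf; split_ifs <;> first | omega | exact ‹False›.elim
    rwa [p1, p2] at h
  have e0c : G.Adj 0 (2 + 2 * r) := by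
    have h := theta_adj3 (a := 2) (b := 2 * r) (c := 2 * s) (i := 0) (by omega) (by omega)
    have p1 : pf (2 + 2 * r) (2 * s) 0 = 0 := by
      unfold pf; split_ifs <;> first | omega | exact ‹False›.elim
    have p2 : pf (2 + 2 * r) (2 * s) (0 + 1) = 2 + 2 * r := by
      unfold pf; split_ifs <;> first | omega | exact ‹False›.elim
    rwa [p1, p2] at h
  -- abbreviations
  set f := fmap r s hr hs with hfdef
  set g := gmap r s with hgdef
  have adjinl : ∀ x y : ℕ, 1 ≤ x → 1 ≤ y → G.Adj (fmapAux r x) (fmapAux r y) →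
      (mergeNbrs G 0).Adj (f x) (f y) := by
    intro x y hx hy h
    rw [hfdef, fmap_eq_inl r s x hr hs hx, fmap_eq_inl r s y hr hs hy]
    exact (mergeNbrs_adj_inl_inl G 0 _ _).mpr h
  have adjinr : ∀ y : ℕ, 1 ≤ y → (∃ u, G.Adj 0 u ∧ G.Adj u (fmapAux r y)) →
      (mergeNbrs G 0).Adj (f 0) (f y) := by
    intro y hy h
    rw [hfdef, fmap_eq_inr, fmap_eq_inl r s y hr hs hy]
    exact (mergeNbrs_adj_inr_inl G 0 _).mpr h
  have hF1 : fmapAux r 1 = 1 := by unfold fmapAux; split_ifs <;> omega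
  have adj01 : (mergeNbrs G 0).Adj (f 0) (f 1) := by
    apply adjinr 1 le_rfl
    rw [hF1]
    exact ⟨2, e02, e21⟩
  -- the three path keys
  have key1 : ∀ i < 1, (mergeNbrs G 0).Adj (f (pf 2 1 i)) (f (pf 2 1 (i + 1))) := by
    intro i hi
    have hi0 : i = 0 := by omega
    subst hi0
    have hx : pf 2 1 0 = 0 := by unfold pf; split_ifs <;> first | omega | exact ‹False›.elim
    have hy : pf 2 1 (0 + 1) = 1 := by unfold pf; split_ifs <;> first | omega | exact ‹False›.elim
    rw [hx, hy]; exact adj01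
  have key2 : ∀ i < 2 * r - 1,
      (mergeNbrs G 0).Adj (f (pf (1 + 1) (2 * r - 1) i)) (f (pf (1 + 1) (2 * r - 1) (i + 1))) := by
    intro i hi
    rcases Nat.eq_zero_or_pos i with rfl | hipos
    · have hx : pf (1 + 1) (2 * r - 1) 0 = 0 := by
        unfold pf; split_ifs <;> first | omega | exact ‹False›.elim
      rw [hx]
      by_cases h1 : (1 : ℕ) = 2 * r - 1
      · have hy : pf (1 + 1) (2 * r - 1) (0 + 1) = 1 := by
          unfold pf; split_ifs <;> first | omega | exact ‹False›.elim
        rw [hy]; exact adj01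
      · have hy : pf (1 + 1) (2 * r - 1) (0 + 1) = 2 := by
          unfold pf; split_ifs <;> first | omega | exact ‹False›.elim
        rw [hy]
        apply adjinr 2 (by omega)
        have hF : fmapAux r 2 = 4 := by unfold fmapAux; split_ifs <;> omega
        rw [hF]
        refine ⟨3, e03, ?_⟩
        have h := theta_adj2 (a := 2) (b := 2 * r) (c := 2 * s) (i := 1) (by norm_num) (by omega)
        have p1 : pf (2 + 1) (2 * r) 1 = 3 := by
          unfold pf; split_ifs <;> first | omega | exact ‹False›.elim
        have p2 : pf (2 + 1) (2 * r) (1 + 1) = 4 := by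
          unfold pf; split_ifs <;> first | omega | exact ‹False›.elim
        rwa [p1, p2] at h
    · have hx : pf (1 + 1) (2 * r - 1) i = i + 1 := by
        unfold pf; split_ifs <;> first | omega | exact ‹False›.elim
      rw [hx]
      by_cases h1 : i + 1 = 2 * r - 1
      · have hy : pf (1 + 1) (2 * r - 1) (i + 1) = 1 := by
          unfold pf; split_ifs <;> first | omega | exact ‹False›.elim
        rw [hy]
        apply adjinl _ _ (by omega) le_rfl
        have hFx : fmapAux r (i + 1) = i + 3 := by unfold fmapAux; split_ifs <;> omega
        rw [hFx, hF1]
        have h := theta_adj2 (a := 2) (b := 2 * r) (c := 2 * s) (i := i + 1) (by norm_num)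
          (by omega)
        have p1 : pf (2 + 1) (2 * r) (i + 1) = i + 3 := by
          unfold pf; split_ifs <;> first | omega | exact ‹False›.elim
        have p2 : pf (2 + 1) (2 * r) (i + 1 + 1) = 1 := by
          unfold pf; split_ifs <;> first | omega | exact ‹False›.elim
        rwa [p1, p2] at h
      · have hy : pf (1 + 1) (2 * r - 1) (i + 1) = i + 2 := by
          unfold pf; split_ifs <;> first | omega | exact ‹False›.elim
        rw [hy]
        apply adjinl _ _ (by omega) (by omega)
        have hFx : fmapAux r (i + 1) = i + 3 := by unfold fmapAux; split_ifs <;> omega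
        have hFy : fmapAux r (i + 2) = i + 4 := by unfold fmapAux; split_ifs <;> omega
        rw [hFx, hFy]
        have h := theta_adj2 (a := 2) (b := 2 * r) (c := 2 * s) (i := i + 1) (by norm_num)
          (by omega)
        have p1 : pf (2 + 1) (2 * r) (i + 1) = i + 3 := by
          unfold pf; split_ifs <;> first | omega | exact ‹False›.elim
        have p2 : pf (2 + 1) (2 * r) (i + 1 + 1) = i + 4 := by
          unfold pf; split_ifs <;> first | omega | exact ‹False›.elim
        rwa [p1, p2] at h
  have key3 : ∀ i < 2 * s - 1,
      (mergeNbrs G 0).Adj (f (pf (1 + (2 * r - 1)) (2 * s - 1) i))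
        (f (pf (1 + (2 * r - 1)) (2 * s - 1) (i + 1))) := by
    intro i hi
    rcases Nat.eq_zero_or_pos i with rfl | hipos
    · have hx : pf (1 + (2 * r - 1)) (2 * s - 1) 0 = 0 := by
        unfold pf; split_ifs <;> first | omega | exact ‹False›.elim
      rw [hx]
      by_cases h1 : (1 : ℕ) = 2 * s - 1
      · have hy : pf (1 + (2 * r - 1)) (2 * s - 1) (0 + 1) = 1 := by
          unfold pf; split_ifs <;> first | omega | exact ‹False›.elim
        rw [hy]; exact adj01
      · have hy : pf (1 + (2 * r - 1)) (2 * s - 1) (0 + 1) = 2 * r := by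
          unfold pf; split_ifs <;> first | omega | exact ‹False›.elim
        rw [hy]
        apply adjinr (2 * r) (by omega)
        have hF : fmapAux r (2 * r) = 2 * r + 3 := by unfold fmapAux; split_ifs <;> omega
        rw [hF]
        refine ⟨2 + 2 * r, e0c, ?_⟩
        have h := theta_adj3 (a := 2) (b := 2 * r) (c := 2 * s) (i := 1) (by omega) (by omega)
        have p1 : pf (2 + 2 * r) (2 * s) 1 = 2 + 2 * r := by
          unfold pf; split_ifs <;> first | omega | exact ‹False›.elim
        have p2 : pf (2 + 2 * r) (2 * s) (1 + 1) = 2 * r + 3 := by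
          unfold pf; split_ifs <;> first | omega | exact ‹False›.elim
        rwa [p1, p2] at h
    · have hx : pf (1 + (2 * r - 1)) (2 * s - 1) i = 2 * r + i - 1 := by
        unfold pf; split_ifs <;> first | omega | exact ‹False›.elim
      rw [hx]
      by_cases h1 : i + 1 = 2 * s - 1
      · have hy : pf (1 + (2 * r - 1)) (2 * s - 1) (i + 1) = 1 := by
          unfold pf; split_ifs <;> first | omega | exact ‹False›.elim
        rw [hy]
        apply adjinl _ _ (by omega) le_rfl
        have hFx : fmapAux r (2 * r + i - 1) = 2 * r + i + 2 := by
          unfold fmapAux; split_ifs <;> omega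
        rw [hFx, hF1]
        have h := theta_adj3 (a := 2) (b := 2 * r) (c := 2 * s) (i := i + 1) (by omega) (by omega)
        have p1 : pf (2 + 2 * r) (2 * s) (i + 1) = 2 * r + i + 2 := by
          unfold pf; split_ifs <;> first | omega | exact ‹False›.elim
        have p2 : pf (2 + 2 * r) (2 * s) (i + 1 + 1) = 1 := by
          unfold pf; split_ifs <;> first | omega | exact ‹False›.elim
        rwa [p1, p2] at h
      · have hy : pf (1 + (2 * r - 1)) (2 * s - 1) (i + 1) = 2 * r + i := by
          unfold pf; split_ifs <;> first | omega | exact ‹False›.elim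
        rw [hy]
        apply adjinl _ _ (by omega) (by omega)
        have hFx : fmapAux r (2 * r + i - 1) = 2 * r + i + 2 := by
          unfold fmapAux; split_ifs <;> omega
        have hFy : fmapAux r (2 * r + i) = 2 * r + i + 3 := by
          unfold fmapAux; split_ifs <;> omega
        rw [hFx, hFy]
        have h := theta_adj3 (a := 2) (b := 2 * r) (c := 2 * s) (i := i + 1) (by omega) (by omega)
        have p1 : pf (2 + 2 * r) (2 * s) (i + 1) = 2 * r + i + 2 := by
          unfold pf; split_ifs <;> first | omega | exact ‹False›.elim
        have p2 : pf (2 + 2 * r) (2 * s) (i + 1 + 1) = 2 * r + i + 3 := by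
          unfold pf; split_ifs <;> first | omega | exact ‹False›.elim
        rwa [p1, p2] at h
  -- transfer
  apply choosable_transfer (mergeNbrs G 0) _ f g _ _ (by omega) hGc
  · intro x y hxy
    obtain ⟨hmem, -⟩ := theta_adj_iff.mp hxy
    rcases hmem with ⟨i, hi, he⟩ | ⟨i, hi, he⟩ | ⟨i, hi, he⟩ <;>
      rw [Sym2.eq_iff] at he <;>
      rcases he with ⟨rfl, rfl⟩ | ⟨rfl, rfl⟩
    · exact key1 i hi
    · exact (key1 i hi).symm
    · exact key2 i hi
    · exact (key2 i hi).symm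
    · exact key3 i hi
    · exact (key3 i hi).symm
  · intro x
    rw [hfdef, hgdef]
    exact gf r s x hr hs

theorem stmt_13 :
    (∀ (V : Type) (G : SimpleGraph V) (v : V) (m : ℕ),
        Choosable G (4 * m) (2 * m) → Choosable (mergeNbrs G v) (4 * m) (2 * m)) ∧
    (∀ m r s : ℕ, 1 ≤ r → 1 ≤ s →
        Choosable (theta 2 (2 * r) (2 * s)) (4 * m) (2 * m) →
        Choosable (theta 1 (2 * r - 1) (2 * s - 1)) (4 * m) (2 * m)) := by
  exact ⟨part1, part2⟩
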